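/- Let α₁, α₂, α₃ be positive pairwise distinct integers with gcd(α₁,α₂,α₃)=1, and write gᵢⱼ = gcd(αᵢ,αⱼ). Set γ₀ = e₂/(e₁e₂-e₃) and 12(e₁e₂-e₃)γ₂ = -2e₂ + e₂(g₁₂² + g₁₃² + g₂₃²) + g₁₂²α₃² + g₁₃²α₂² + g₂₃²α₁². If γ₀/γ₂ ≥ 3, then g₁₂ = g₁₃ = g₂₃ = 1, i.e., the weights are pairwise coprime. -/

import Mathlib

set_option maxHeartbeats 1000000


/-- If the ratio γ₀/γ₂ of the first two nonzero Laurent coefficients of the on-shell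
Hilbert series of a generic effective circle action on ℂ³ is at least 3, then the
weights are pairwise coprime. -/
theorem stmt_6 (α₁ α₂ α₃ : ℕ) (h₁ : 0 < α₁) (h₂ : 0 < α₂) (h₃ : 0 < α₃)
    (hne₁₂ : α₁ ≠ α₂) (hne₁₃ : α₁ ≠ α₃) (hne₂₃ : α₂ ≠ α₃)
    (hgcd : Nat.gcd (Nat.gcd α₁ α₂) α₃ = 1)
    (e₁ e₂ e₃ : ℚ) (he₁ : e₁ = α₁ + α₂ + α₃) (he₂ : e₂ = α₁ * α₂ + α₁ * α₃ + α₂ * α₃)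
    (he₃ : e₃ = α₁ * α₂ * α₃)
    (g₁₂ g₁₃ g₂₃ : ℕ) (hg₁₂ : g₁₂ = Nat.gcd α₁ α₂) (hg₁₃ : g₁₃ = Nat.gcd α₁ α₃)
    (hg₂₃ : g₂₃ = Nat.gcd α₂ α₃)
    (γ₀ γ₂ : ℚ) (hγ₀ : γ₀ = e₂ / (e₁ * e₂ - e₃))
    (hγ₂ : 12 * (e₁ * e₂ - e₃) * γ₂ =
      -2 * e₂ + e₂ * ((g₁₂ : ℚ) ^ 2 + (g₁₃ : ℚ) ^ 2 + (g₂₃ : ℚ) ^ 2)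
        + (g₁₂ : ℚ) ^ 2 * (α₃ : ℚ) ^ 2 + (g₁₃ : ℚ) ^ 2 * (α₂ : ℚ) ^ 2
        + (g₂₃ : ℚ) ^ 2 * (α₁ : ℚ) ^ 2)
    (hr : 3 ≤ γ₀ / γ₂) :
    g₁₂ = 1 ∧ g₁₃ = 1 ∧ g₂₃ = 1 := by
  have ha : (0:ℚ) < α₁ := by exact_mod_cast h₁
  have hb : (0:ℚ) < α₂ := by exact_mod_cast h₂
  have hc : (0:ℚ) < α₃ := by exact_mod_cast h₃
  have hg1 : 1 ≤ g₁₂ := by rw [hg₁₂]; exact Nat.gcd_pos_of_pos_left _ h₁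
  have hg2 : 1 ≤ g₁₃ := by rw [hg₁₃]; exact Nat.gcd_pos_of_pos_left _ h₁
  have hg3 : 1 ≤ g₂₃ := by rw [hg₂₃]; exact Nat.gcd_pos_of_pos_left _ h₂
  have hp : (1:ℚ) ≤ (g₁₂:ℚ) := by exact_mod_cast hg1
  have hq : (1:ℚ) ≤ (g₁₃:ℚ) := by exact_mod_cast hg2
  have hs : (1:ℚ) ≤ (g₂₃:ℚ) := by exact_mod_cast hg3
  have hp2 : (1:ℚ) ≤ (g₁₂:ℚ) ^ 2 := by nlinarith
  have hq2 : (1:ℚ) ≤ (g₁₃:ℚ) ^ 2 := by nlinarith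
  have hs2 : (1:ℚ) ≤ (g₂₃:ℚ) ^ 2 := by nlinarith
  have he2pos : 0 < e₂ := by rw [he₂]; positivity
  have hD : 0 < e₁ * e₂ - e₃ := by
    rw [he₁, he₂, he₃]
    have k1 := mul_pos (mul_pos ha ha) hb
    have k2 := mul_pos (mul_pos ha ha) hc
    have k3 := mul_pos (mul_pos ha hb) hb
    have k4 := mul_pos (mul_pos hb hb) hc
    have k5 := mul_pos (mul_pos ha hc) hc
    have k6 := mul_pos (mul_pos hb hc) hc
    have k7 := mul_pos (mul_pos ha hb) hc
    linarith
  have hNpos : 0 < 12 * (e₁ * e₂ - e₃) * γ₂ := by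
    rw [hγ₂]
    have t1 := mul_le_mul_of_nonneg_left hp2 he2pos.le
    have t2 := mul_le_mul_of_nonneg_left hq2 he2pos.le
    have t3 := mul_le_mul_of_nonneg_left hs2 he2pos.le
    have t4 := mul_nonneg (sq_nonneg ((g₁₂:ℚ))) (sq_nonneg ((α₃:ℚ)))
    have t5 := mul_nonneg (sq_nonneg ((g₁₃:ℚ))) (sq_nonneg ((α₂:ℚ)))
    have t6 := mul_nonneg (sq_nonneg ((g₂₃:ℚ))) (sq_nonneg ((α₁:ℚ)))
    nlinarith [t1, t2, t3, t4, t5, t6]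
  have hγ₂pos : 0 < γ₂ := by
    by_contra h
    push_neg at h
    nlinarith [mul_nonpos_of_nonneg_of_nonpos (by linarith : (0:ℚ) ≤ 12 * (e₁ * e₂ - e₃)) h]
  have h3 : 3 * γ₂ ≤ γ₀ := by
    have := (le_div_iff₀ hγ₂pos).mp hr
    linarith
  have hγ₀D : γ₀ * (e₁ * e₂ - e₃) = e₂ := by
    rw [hγ₀]; exact div_mul_cancel₀ _ hD.ne'
  have hNle : -2 * e₂ + e₂ * ((g₁₂ : ℚ) ^ 2 + (g₁₃ : ℚ) ^ 2 + (g₂₃ : ℚ) ^ 2)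
        + (g₁₂ : ℚ) ^ 2 * (α₃ : ℚ) ^ 2 + (g₁₃ : ℚ) ^ 2 * (α₂ : ℚ) ^ 2
        + (g₂₃ : ℚ) ^ 2 * (α₁ : ℚ) ^ 2 ≤ 4 * e₂ := by
    have h4 : 12 * (e₁ * e₂ - e₃) * γ₂ ≤ 4 * (γ₀ * (e₁ * e₂ - e₃)) := by
      nlinarith [mul_nonneg (by linarith : (0:ℚ) ≤ γ₀ - 3 * γ₂) hD.le]
    rw [hγ₀D, hγ₂] at h4
    linarith
  refine ⟨?_, ?_, ?_⟩
  · by_contra h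
    have h2 : 2 ≤ g₁₂ := by omega
    have h2' : (2:ℚ) ≤ (g₁₂:ℚ) := by exact_mod_cast h2
    have h22 : (4:ℚ) ≤ (g₁₂:ℚ) ^ 2 := by nlinarith
    linarith [mul_pos ha ha, mul_pos hb hb, mul_pos hc hc,
      mul_le_mul_of_nonneg_left h22 he2pos.le,
      mul_le_mul_of_nonneg_left hq2 he2pos.le,
      mul_le_mul_of_nonneg_left hs2 he2pos.le,
      mul_le_mul_of_nonneg_right h22 (mul_pos hc hc).le,
      mul_le_mul_of_nonneg_right hq2 (mul_pos hb hb).le,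
      mul_le_mul_of_nonneg_right hs2 (mul_pos ha ha).le]
  · by_contra h
    have h2 : 2 ≤ g₁₃ := by omega
    have h2' : (2:ℚ) ≤ (g₁₃:ℚ) := by exact_mod_cast h2
    have h22 : (4:ℚ) ≤ (g₁₃:ℚ) ^ 2 := by nlinarith
    linarith [mul_pos ha ha, mul_pos hb hb, mul_pos hc hc,
      mul_le_mul_of_nonneg_left hp2 he2pos.le,
      mul_le_mul_of_nonneg_left h22 he2pos.le,
      mul_le_mul_of_nonneg_left hs2 he2pos.le,
      mul_le_mul_of_nonneg_right hp2 (mul_pos hc hc).le,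
      mul_le_mul_of_nonneg_right h22 (mul_pos hb hb).le,
      mul_le_mul_of_nonneg_right hs2 (mul_pos ha ha).le]
  · by_contra h
    have h2 : 2 ≤ g₂₃ := by omega
    have h2' : (2:ℚ) ≤ (g₂₃:ℚ) := by exact_mod_cast h2
    have h22 : (4:ℚ) ≤ (g₂₃:ℚ) ^ 2 := by nlinarith
    linarith [mul_pos ha ha, mul_pos hb hb, mul_pos hc hc,
      mul_le_mul_of_nonneg_left hp2 he2pos.le,
      mul_le_mul_of_nonneg_left hq2 he2pos.le,
      mul_le_mul_of_nonneg_left h22 he2pos.le,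
      mul_le_mul_of_nonneg_right hp2 (mul_pos hc hc).le,
      mul_le_mul_of_nonneg_right hq2 (mul_pos hb hb).le,
      mul_le_mul_of_nonneg_right h22 (mul_pos ha ha).le]
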